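/- arXiv:1204.1078 — 4 statements merged into one kernel-verified Lean document; each statement's English description precedes it below -/
import Mathlib

section
/- Let k be a nonnegative integer. Then there exist rational numbers a and b such that \sum_{n=1}^{\infty} n^k 2^n / \binom{2n}{n} = a + b \pi. -/
open scoped BigOperators
open Finset intervalIntegral MeasureTheory
open scoped Nat

noncomputable def bb (m : ℕ) : ℝ := 2 ^ m / (Nat.choose (2 * m) m)

lemma choose_pos' (m : ℕ) : (0:ℝ) < (Nat.choose (2*m) m : ℝ) := by
  exact_mod_cast Nat.choose_pos (by omega)

lemma bb_pos (m : ℕ) : 0 < bb m := by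
  unfold bb; exact div_pos (by positivity) (choose_pos' m)

lemma bb_zero : bb 0 = 1 := by simp [bb]

lemma bb_rec (m : ℕ) : (2 * (m:ℝ) + 1) * bb (m + 1) = ((m:ℝ) + 1) * bb m := by
  have h := Nat.succ_mul_centralBinom_succ m
  have h1 : (((m:ℕ)+1) * Nat.centralBinom (m+1) : ℝ) = ((2 * (2*m+1) * Nat.centralBinom m : ℕ) : ℝ) := by
    exact_mod_cast congrArg (Nat.cast : ℕ → ℝ) h
  unfold bb
  rw [show 2*(m+1) = 2*m+1+1 by ring] at *
  rw [show (Nat.choose (2*m+1+1) (m+1) : ℝ) = Nat.centralBinom (m+1) by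
        rw [Nat.centralBinom_eq_two_mul_choose]; norm_num; ring_nf,
      show (Nat.choose (2*m) m : ℝ) = Nat.centralBinom m by
        rw [Nat.centralBinom_eq_two_mul_choose]]
  have c1 : (0:ℝ) < Nat.centralBinom (m+1) := by exact_mod_cast Nat.centralBinom_pos _
  have c0 : (0:ℝ) < Nat.centralBinom m := by exact_mod_cast Nat.centralBinom_pos _
  push_cast at h1
  field_simp
  ring_nf
  ring_nf at h1
  nlinarith [h1, pow_pos (show (0:ℝ) < 2 by norm_num) m]

lemma bb_le (m : ℕ) (hm : 0 < m) : bb m ≤ 2 * m * (1/2 : ℝ) ^ m := by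
  have h' : (4:ℝ) ^ m ≤ 2 * m * Nat.centralBinom m := by
    exact_mod_cast Nat.four_pow_le_two_mul_self_mul_centralBinom m hm
  rw [Nat.centralBinom_eq_two_mul_choose] at h'
  unfold bb
  rw [div_le_iff₀ (choose_pos' m)]
  have e1 : (4:ℝ)^m = 2^m * 2^m := by rw [← mul_pow]; norm_num
  have e2 : ((1:ℝ)/2)^m * 2^m = 1 := by rw [← mul_pow]; norm_num
  have h2 : (0:ℝ) < 2^m := by positivity
  nlinarith [h']

lemma sumk (k : ℕ) : Summable (fun m : ℕ => ((m:ℝ)+1)^k * bb (m+1)) := by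
  have base : Summable (fun n : ℕ => (n:ℝ)^(k+1) * (1/2:ℝ)^n) :=
    summable_pow_mul_geometric_of_norm_lt_one (k+1)
      (by rw [Real.norm_eq_abs]; rw [abs_of_pos] <;> norm_num)
  have base1 := (summable_nat_add_iff (f := fun n : ℕ => (n:ℝ)^(k+1) * (1/2:ℝ)^n) 1).mpr base
  have base2 : Summable (fun m : ℕ => 2 * (((m:ℝ)+1)^(k+1) * (1/2:ℝ)^(m+1))) :=
    (base1.congr (fun m => by push_cast; ring)).mul_left 2
  refine base2.of_nonneg_of_le (fun m => ?_) (fun m => ?_)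
  · exact mul_nonneg (by positivity) (bb_pos (m+1)).le
  · have h1 := bb_le (m+1) (Nat.succ_pos m)
    have h1' : bb (m+1) ≤ 2*((m:ℝ)+1)*(1/2:ℝ)^(m+1) := by push_cast at h1; linarith
    have h2 : (0:ℝ) ≤ ((m:ℝ)+1)^k := by positivity
    calc ((m:ℝ)+1)^k * bb (m+1) ≤ ((m:ℝ)+1)^k * (2*((m:ℝ)+1)*(1/2:ℝ)^(m+1)) :=
          mul_le_mul_of_nonneg_left h1' h2
      _ = 2 * (((m:ℝ)+1)^(k+1)*(1/2:ℝ)^(m+1)) := by ring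

lemma summable_bb : Summable bb := by
  have h : Summable (fun m : ℕ => bb (m+1)) := (sumk 0).congr (fun m => by simp)
  exact (summable_nat_add_iff 1).mp h

noncomputable def T (k : ℕ) : ℝ := ∑' m : ℕ, ((m:ℝ)+1)^k * bb (m+1)

lemma T_rec (j : ℕ) :
    T (j+1) = 1 + T j + ∑ i ∈ range (j+1), ((j+1).choose i : ℝ) * T i := by
  have key : ∀ m : ℕ, 2 * (((m:ℝ)+1)^(j+1) * bb (m+1)) - ((m:ℝ)+1)^j * bb (m+1)
      = ((m:ℝ)+1)^(j+1) * bb m := by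
    intro m
    have h := bb_rec m
    linear_combination ((m:ℝ)+1)^j * h
  have sg : Summable (fun m : ℕ => ((m:ℝ)+1)^(j+1) * bb m) := by
    have := ((sumk (j+1)).mul_left 2).sub (sumk j)
    exact this.congr key
  have hL : (∑' m : ℕ, (2 * (((m:ℝ)+1)^(j+1) * bb (m+1)) - ((m:ℝ)+1)^j * bb (m+1)))
      = 2 * T (j+1) - T j := by
    rw [Summable.tsum_sub ((sumk (j+1)).mul_left 2) (sumk j), tsum_mul_left]; rfl
  have hsplit : (∑' m : ℕ, ((m:ℝ)+1)^(j+1) * bb m)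
      = 1 + ∑' m : ℕ, (((m+1:ℕ):ℝ)+1)^(j+1) * bb (m+1) := by
    rw [Summable.tsum_eq_zero_add sg]
    simp [bb_zero]
  have hexp : ∀ m : ℕ, (((m+1:ℕ):ℝ)+1)^(j+1) * bb (m+1)
      = ∑ i ∈ range (j+2), ((j+1).choose i : ℝ) * (((m:ℝ)+1)^i * bb (m+1)) := by
    intro m
    have hadd := add_pow ((m:ℝ)+1) 1 (j+1)
    push_cast
    rw [show (m:ℝ)+1+1 = ((m:ℝ)+1) + 1 by ring, hadd, sum_mul]
    refine Finset.sum_congr rfl fun i _ => ?_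
    push_cast; ring
  have hsum : (∑' m : ℕ, (((m+1:ℕ):ℝ)+1)^(j+1) * bb (m+1))
      = ∑ i ∈ range (j+2), ((j+1).choose i : ℝ) * T i := by
    rw [tsum_congr hexp, Summable.tsum_finsetSum (fun i _ => (sumk i).mul_left _)]
    exact Finset.sum_congr rfl fun i _ => (tsum_mul_left)
  have heq : 2 * T (j+1) - T j
      = 1 + (∑ i ∈ range (j+1), ((j+1).choose i : ℝ) * T i + T (j+1)) := by
    rw [← hL, tsum_congr key, hsplit, hsum, sum_range_succ]
    simp
  linarith

lemma T_mem (k : ℕ) : ∃ a c : ℚ, T k = a + c * T 0 := by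
  induction k using Nat.strong_induction_on with
  | _ k ih =>
    match k, ih with
    | 0, _ => exact ⟨0, 1, by push_cast; ring⟩
    | j+1, ih =>
      have H : ∀ i, ∃ a c : ℚ, i < j+1 → T i = a + c * T 0 := by
        intro i
        by_cases h : i < j+1
        · obtain ⟨a, c, hac⟩ := ih i h; exact ⟨a, c, fun _ => hac⟩
        · exact ⟨0, 0, fun h' => absurd h' h⟩
      choose a c hac using H
      refine ⟨1 + a j + ∑ i ∈ range (j+1), ((j+1).choose i : ℚ) * a i,
              c j + ∑ i ∈ range (j+1), ((j+1).choose i : ℚ) * c i, ?_⟩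
      rw [T_rec j]
      have hTj := hac j (by omega)
      have hsum : ∑ i ∈ range (j+1), ((j+1).choose i : ℝ) * T i
          = ∑ i ∈ range (j+1), ((j+1).choose i : ℝ) * (a i : ℝ)
            + (∑ i ∈ range (j+1), ((j+1).choose i : ℝ) * (c i : ℝ)) * T 0 := by
        rw [sum_mul, ← sum_add_distrib]
        refine Finset.sum_congr rfl fun i hi => ?_
        rw [hac i (mem_range.mp hi)]; ring
      rw [hsum, hTj]
      push_cast
      ring

lemma prod_shift (m : ℕ) : m ! * ∏ j ∈ range (m+1), (m+1+j) = (2*m+1)! := by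
  have h1 : ∏ j ∈ range (m+1), (m+1+j) = ∏ x ∈ Finset.Ico (m+1) (2*m+2), x := by
    rw [Finset.prod_Ico_eq_prod_range]
    have : 2*m+2 - (m+1) = m+1 := by omega
    rw [this]
  rw [h1, ← Finset.prod_Ico_id_eq_factorial, ← Finset.prod_Ico_id_eq_factorial]
  rw [show 2*m+1+1 = 2*m+2 from rfl]
  exact Finset.prod_Ico_consecutive _ (by omega) (by omega)

lemma beta_nat (m : ℕ) : (∫ x in (0:ℝ)..1, x^m * (1-x)^m) = (m ! * m ! : ℝ) / (2*m+1)! := by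
  have hu : 0 < Complex.re ((m:ℂ)+1) := by simp; positivity
  have h := Complex.betaIntegral_eval_nat_add_one_right hu m
  have hofReal : Complex.betaIntegral ((m:ℂ)+1) ((m:ℂ)+1)
      = ((∫ x in (0:ℝ)..1, x^m * (1-x)^m : ℝ) : ℂ) := by
    rw [Complex.betaIntegral, ← intervalIntegral.integral_ofReal]
    refine intervalIntegral.integral_congr fun x hx => ?_
    have he : (m:ℂ)+1-1 = ((m:ℕ):ℂ) := by ring
    rw [he, Complex.cpow_natCast, Complex.cpow_natCast]
    push_cast
    ring
  have hprod : (∏ j ∈ range (m+1), ((m:ℂ)+1+j)) * (m ! : ℂ) = ((2*m+1)! : ℂ) := by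
    have hp := prod_shift m
    push_cast [← hp]
    ring
  have hfac : (m ! : ℂ) ≠ 0 := by exact_mod_cast (Nat.factorial_pos m).ne'
  have hfac2 : ((2*m+1)! : ℂ) ≠ 0 := by exact_mod_cast (Nat.factorial_pos _).ne'
  have hprodne : (∏ j ∈ range (m+1), ((m:ℂ)+1+j)) ≠ 0 := by
    intro h0
    rw [h0, zero_mul] at hprod
    exact hfac2 hprod.symm
  rw [hofReal] at h
  have hfin : ((∫ x in (0:ℝ)..1, x^m * (1-x)^m : ℝ) : ℂ) = ((m ! * m ! : ℝ) / ((2*m+1)! : ℝ) : ℂ) := by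
    rw [h]
    push_cast
    field_simp
    linear_combination (-1:ℂ) * hprod
  exact_mod_cast hfin

lemma int_F (m : ℕ) : (∫ x in (0:ℝ)..1, (2*(m:ℝ)+1) * (2*x*(1-x))^m) = bb m := by
  have h1 : (∫ x in (0:ℝ)..1, (2*(m:ℝ)+1) * (2*x*(1-x))^m)
      = ((2*(m:ℝ)+1) * 2^m) * ∫ x in (0:ℝ)..1, x^m*(1-x)^m := by
    rw [← intervalIntegral.integral_const_mul]
    refine intervalIntegral.integral_congr fun x hx => ?_
    rw [show (2*x*(1-x)) = 2*(x*(1-x)) by ring, mul_pow, mul_pow]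
    ring
  rw [h1, beta_nat]
  unfold bb
  have hch : (Nat.choose (2*m) m : ℝ) * (m ! : ℝ) * (m ! : ℝ) = ((2*m)! : ℝ) := by
    have hc := Nat.choose_mul_factorial_mul_factorial (show m ≤ 2*m by omega)
    rw [show 2*m - m = m by omega] at hc
    exact_mod_cast congrArg Nat.cast hc
  have hfact : ((2*m+1)! : ℝ) = (2*(m:ℝ)+1) * ((2*m)! : ℝ) := by
    rw [show 2*m+1 = (2*m)+1 from rfl, Nat.factorial_succ]; push_cast; ring
  have c1 : (Nat.choose (2*m) m : ℝ) ≠ 0 := by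
    exact_mod_cast (Nat.choose_pos (show m ≤ 2*m by omega)).ne'
  have c2 : ((2*m+1)! : ℝ) ≠ 0 := by exact_mod_cast (Nat.factorial_pos _).ne'
  rw [hfact]
  field_simp
  linear_combination hch

lemma ftc_eval :
    (∫ x in (0:ℝ)..1, (1+2*x*(1-x))/(1-2*x*(1-x))^2) = Real.pi/2 + 2 := by
  set F : ℝ → ℝ := fun t => Real.arctan (2*t-1) + 2*(2*t-1)/(1+(2*t-1)^2) with hF
  have hden : ∀ t : ℝ, (0:ℝ) < 1+(2*t-1)^2 := fun t => by positivity
  have hderiv : ∀ t ∈ Set.uIcc (0:ℝ) 1, HasDerivAt F ((1+2*t*(1-t))/(1-2*t*(1-t))^2) t := by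
    intro t _
    have h1 : HasDerivAt (fun t : ℝ => 2*t-1) 2 t := by
      simpa using ((hasDerivAt_id t).const_mul 2).sub_const 1
    have h2 : HasDerivAt (fun t : ℝ => Real.arctan (2*t-1)) (1/(1+(2*t-1)^2) * 2) t := by
      have := (Real.hasDerivAt_arctan (2*t-1)).comp t h1
      simpa [Function.comp_def] using this
    have h3 : HasDerivAt (fun t : ℝ => 2*(2*t-1)) 4 t := by
      exact (h1.const_mul 2).congr_deriv (by norm_num)
    have h4 : HasDerivAt (fun t : ℝ => 1+(2*t-1)^2) (2*(2*t-1)*2) t := by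
      have := ((h1.pow 2).const_add 1)
      simpa using this
    have h5 : HasDerivAt (fun t : ℝ => 2*(2*t-1)/(1+(2*t-1)^2))
        ((4*(1+(2*t-1)^2) - 2*(2*t-1)*(2*(2*t-1)*2))/(1+(2*t-1)^2)^2) t :=
      h3.div h4 (hden t).ne'
    have h6 := h2.add h5
    refine h6.congr_deriv ?_
    have hne : (1+(2*t-1)^2) ≠ 0 := (hden t).ne'
    have hne2 : (1-2*t*(1-t)) ≠ 0 := by nlinarith [sq_nonneg (2*t-1)]
    field_simp
    ring
  have hcont : ContinuousOn (fun x : ℝ => (1+2*x*(1-x))/(1-2*x*(1-x))^2) (Set.uIcc 0 1) := by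
    apply ContinuousOn.div
    · fun_prop
    · fun_prop
    · intro x _
      have : (0:ℝ) < 1-2*x*(1-x) := by nlinarith [sq_nonneg (2*x-1)]
      positivity
  rw [intervalIntegral.integral_eq_sub_of_hasDerivAt hderiv (hcont.intervalIntegrable)]
  have hF1 : F 1 = Real.pi/4 + 1 := by
    simp [hF, Real.arctan_one]; norm_num
  have hF0 : F 0 = -(Real.pi/4) - 1 := by
    simp [hF, Real.arctan_neg, Real.arctan_one]; linarith
  rw [hF1, hF0]; ring

lemma tsum_pointwise {x : ℝ} (hx : x ∈ Set.Ioc (0:ℝ) 1) :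
    (∑' m : ℕ, (2*(m:ℝ)+1) * (2*x*(1-x))^m) = (1+2*x*(1-x))/(1-2*x*(1-x))^2 := by
  obtain ⟨hx0, hx1⟩ := hx
  set u : ℝ := 2*x*(1-x) with hu
  have hu0 : 0 ≤ u := by nlinarith
  have hu1 : u < 1 := by nlinarith [sq_nonneg (2*x-1)]
  have hnorm : ‖u‖ < 1 := by rw [Real.norm_eq_abs, abs_of_nonneg hu0]; exact hu1
  have h1 : Summable (fun m : ℕ => (m:ℝ) * u^m) :=
    (hasSum_coe_mul_geometric_of_norm_lt_one hnorm).summable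
  have h2 : Summable (fun m : ℕ => u^m) := summable_geometric_of_lt_one hu0 hu1
  have heq : ∀ m : ℕ, (2*(m:ℝ)+1) * u^m = 2*((m:ℝ)*u^m) + u^m := fun m => by ring
  rw [tsum_congr heq, Summable.tsum_add (h1.mul_left 2) h2, tsum_mul_left,
    tsum_coe_mul_geometric_of_norm_lt_one hnorm, tsum_geometric_of_lt_one hu0 hu1]
  have hne : 1 - u ≠ 0 := by linarith
  field_simp
  ring

lemma S_val : (∑' m : ℕ, bb m) = Real.pi/2 + 2 := by
  have key : ∀ m : ℕ, (∫ x in Set.Ioc (0:ℝ) 1, (2*(m:ℝ)+1) * (2*x*(1-x))^m) = bb m := by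
    intro m
    rw [← intervalIntegral.integral_of_le zero_le_one]
    exact int_F m
  have hF_int : ∀ m : ℕ, IntegrableOn (fun x : ℝ => (2*(m:ℝ)+1)*(2*x*(1-x))^m) (Set.Ioc 0 1) := by
    intro m
    exact (intervalIntegrable_iff_integrableOn_Ioc_of_le zero_le_one).mp
      ((Continuous.intervalIntegrable (by fun_prop) 0 1))
  have hnonneg : ∀ m : ℕ, ∀ x ∈ Set.Ioc (0:ℝ) 1, 0 ≤ (2*(m:ℝ)+1)*(2*x*(1-x))^m := by
    intro m x hx
    obtain ⟨hx0, hx1⟩ := hx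
    have : 0 ≤ 2*x*(1-x) := by nlinarith
    positivity
  have hnorm_int : ∀ m : ℕ, (∫ x in Set.Ioc (0:ℝ) 1, ‖(2*(m:ℝ)+1)*(2*x*(1-x))^m‖) = bb m := by
    intro m
    rw [← key m]
    exact setIntegral_congr_fun measurableSet_Ioc fun x hx => Real.norm_of_nonneg (hnonneg m x hx)
  have hsummable : Summable (fun m : ℕ => ∫ x in Set.Ioc (0:ℝ) 1, ‖(2*(m:ℝ)+1)*(2*x*(1-x))^m‖) :=
    summable_bb.congr fun m => (hnorm_int m).symm
  have hinter := MeasureTheory.integral_tsum_of_summable_integral_norm hF_int hsummable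
  calc (∑' m : ℕ, bb m) = ∑' m : ℕ, ∫ x in Set.Ioc (0:ℝ) 1, (2*(m:ℝ)+1)*(2*x*(1-x))^m :=
        tsum_congr fun m => (key m).symm
    _ = ∫ x in Set.Ioc (0:ℝ) 1, ∑' m : ℕ, (2*(m:ℝ)+1)*(2*x*(1-x))^m := hinter
    _ = ∫ x in Set.Ioc (0:ℝ) 1, (1+2*x*(1-x))/(1-2*x*(1-x))^2 :=
        setIntegral_congr_fun measurableSet_Ioc fun x hx => tsum_pointwise hx
    _ = ∫ x in (0:ℝ)..1, (1+2*x*(1-x))/(1-2*x*(1-x))^2 :=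
        (intervalIntegral.integral_of_le zero_le_one).symm
    _ = Real.pi/2 + 2 := ftc_eval

lemma T0_val : T 0 = 1 + Real.pi/2 := by
  have hsplit := Summable.tsum_eq_zero_add summable_bb
  have hT : T 0 = ∑' m : ℕ, bb (m+1) := tsum_congr fun m => by simp
  have hS := S_val
  rw [hsplit, bb_zero] at hS
  rw [hT]
  linarith

theorem apery_series_two_eq_rat_add_rat_mul_pi (k : ℕ) :
    ∃ a b : ℚ,
      (∑' n : ℕ, ((n : ℝ) + 1) ^ k * (2 : ℝ) ^ (n + 1) /
          (Nat.choose (2 * (n + 1)) (n + 1))) = (a : ℝ) + (b : ℝ) * Real.pi := by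
  obtain ⟨a, c, h⟩ := T_mem k
  refine ⟨a + c, c/2, ?_⟩
  have hL : (∑' n : ℕ, ((n : ℝ) + 1) ^ k * (2 : ℝ) ^ (n + 1) /
      (Nat.choose (2 * (n + 1)) (n + 1))) = T k := by
    refine tsum_congr fun n => ?_
    unfold bb
    rw [mul_div_assoc]
  rw [hL, h, T0_val]
  push_cast
  ring
end

section
/- Let z be a real number with 0 < z < 4. Then \sum_{n=1}^{\infty} z^n / \binom{2n}{n} = \frac{z}{4-z} + \frac{4\sqrt{z}}{(4-z)^{3/2}} \arcsin(\sqrt{z}/2). -/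
open scoped BigOperators
open intervalIntegral MeasureTheory Real

set_option maxHeartbeats 1000000 in
private theorem icb_beta_rec (m n : ℕ) :
    ((m:ℝ)+1) * ∫ t in (0:ℝ)..1, t^m * (1-t)^(n+1) =
    ((n:ℝ)+1) * ∫ t in (0:ℝ)..1, t^(m+1) * (1-t)^n := by
  have h : ∀ t ∈ Set.uIcc (0:ℝ) 1, HasDerivAt (fun t : ℝ => t^(m+1) * (1-t)^(n+1))
      (((m:ℝ)+1) * (t^m * (1-t)^(n+1)) - ((n:ℝ)+1) * (t^(m+1) * (1-t)^n)) t := by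
    intro t _
    have h1 : HasDerivAt (fun t : ℝ => t^(m+1)) (((m:ℝ)+1) * t^m) t := by
      simpa using (hasDerivAt_pow (m+1) t)
    have h2 : HasDerivAt (fun t : ℝ => (1-t)^(n+1)) (-(((n:ℝ)+1) * (1-t)^n)) t := by
      have := ((hasDerivAt_pow (n+1) (1-t)).comp t ((hasDerivAt_const t (1:ℝ)).sub (hasDerivAt_id t)))
      simp at this; exact this
    have := h1.mul h2
    refine this.congr_deriv ?_
    ring
  have hint : IntervalIntegrable (fun t : ℝ => ((m:ℝ)+1) * (t^m * (1-t)^(n+1)) - ((n:ℝ)+1) * (t^(m+1) * (1-t)^n)) volume 0 1 := by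
    apply Continuous.intervalIntegrable; continuity
  have := intervalIntegral.integral_eq_sub_of_hasDerivAt h hint
  simp at this
  rw [intervalIntegral.integral_sub] at this
  · rw [intervalIntegral.integral_const_mul, intervalIntegral.integral_const_mul] at this
    linarith
  all_goals apply Continuous.intervalIntegrable; continuity

private theorem icb_beta_nat (n : ℕ) : ∀ m : ℕ, ∫ t in (0:ℝ)..1, t^m * (1-t)^n
    = (m.factorial * n.factorial : ℝ) / (m+n+1).factorial := by
  induction n with
  | zero =>
    intro m
    have hm : ((m:ℝ)+1) ≠ 0 := by positivity
    have hf : (m.factorial : ℝ) ≠ 0 := by positivity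
    simp [integral_pow, Nat.factorial_succ]
    field_simp
  | succ n ih =>
    intro m
    have h := icb_beta_rec m n
    rw [ih (m+1)] at h
    have hm : ((m:ℝ)+1) ≠ 0 := by positivity
    have key : (m + 1 + n + 1) = (m + (n+1) + 1) := by ring
    rw [key] at h
    have hfact : ((m+1).factorial : ℝ) = (m+1) * m.factorial := by
      rw [Nat.factorial_succ]; push_cast; ring
    have hfact2 : ((n+1).factorial : ℝ) = (n+1) * n.factorial := by
      rw [Nat.factorial_succ]; push_cast; ring
    rw [hfact] at h
    rw [hfact2]
    have hd : ((m + (n+1) + 1).factorial : ℝ) ≠ 0 := by positivity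
    field_simp at h
    rw [eq_div_iff hd]; linear_combination h

private theorem icb_term_eq (z : ℝ) (n : ℕ) :
    ∫ t in Set.Ioc (0:ℝ) 1, ((n:ℝ)+1) * z^(n+1) * (t^n * (1-t)^(n+1))
      = z^(n+1) / (Nat.choose (2*(n+1)) (n+1) : ℝ) := by
  rw [← intervalIntegral.integral_of_le zero_le_one]
  rw [intervalIntegral.integral_const_mul, icb_beta_nat (n+1) n]
  have hch : (Nat.choose (2*(n+1)) (n+1) : ℝ) * (n+1).factorial * (n+1).factorial
      = (2*(n+1)).factorial := by
    have := Nat.choose_mul_factorial_mul_factorial (by omega : n+1 ≤ 2*(n+1))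
    have h2 : 2*(n+1) - (n+1) = n+1 := by omega
    rw [h2] at this
    exact_mod_cast congrArg Nat.cast this
  have h1 : ((n + (n+1) + 1).factorial : ℝ) = ((2*(n+1)).factorial : ℝ) := by norm_num; ring_nf
  have hC : (0:ℝ) < (Nat.choose (2*(n+1)) (n+1) : ℝ) := by
    exact_mod_cast Nat.choose_pos (by omega)
  have hfn : ((n+1).factorial : ℝ) = ((n:ℝ)+1) * n.factorial := by
    rw [Nat.factorial_succ]; push_cast; ring
  have hne : ((2*(n+1)).factorial : ℝ) ≠ 0 := by positivity
  have hfne : ((n).factorial : ℝ) ≠ 0 := by positivity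
  rw [h1]
  have key : ((n:ℝ)+1) * (n.factorial : ℝ) * ((n+1).factorial : ℝ) * (Nat.choose (2*(n+1)) (n+1) : ℝ) = ((2*(n+1)).factorial : ℝ) := by
    rw [← hfn]
    linear_combination hch
  rw [eq_div_iff (ne_of_gt hC)]
  field_simp
  linear_combination z^(n+1) * key

private theorem icb_summable (z : ℝ) (hz0 : 0 < z) (hz4 : z < 4) :
    Summable (fun n : ℕ => z^(n+1) / (Nat.choose (2*(n+1)) (n+1) : ℝ)) := by
  have hr : |z/4| < 1 := by rw [abs_of_pos (by positivity)]; linarith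
  have hs : Summable (fun n : ℕ => ((2*(n:ℝ)+3)) * (z/4)^(n+1)) := by
    have h1 := summable_pow_mul_geometric_of_norm_lt_one (R := ℝ) 1 (by simpa using hr)
    simp only [pow_one] at h1
    have h2 : Summable (fun n : ℕ => (z/4)^n) := summable_geometric_of_abs_lt_one hr
    have := ((h1.mul_left 2).add (h2.mul_left 3)).mul_left (z/4)
    apply this.congr
    intro n
    ring
  apply Summable.of_nonneg_of_le _ _ hs
  · intro n; positivity
  · intro n
    have h4 := Nat.four_pow_le_two_mul_add_one_mul_central_binom (n+1)
    have hC : (0:ℝ) < (Nat.choose (2*(n+1)) (n+1) : ℝ) := by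
      exact_mod_cast Nat.choose_pos (by omega)
    have h4' : (4:ℝ)^(n+1) ≤ (2*(n:ℝ)+3) * (Nat.choose (2*(n+1)) (n+1) : ℝ) := by
      have e : ((2*(n+1)+1 : ℕ) : ℝ) = 2*(n:ℝ)+3 := by push_cast; ring
      rw [← e]; exact_mod_cast h4
    rw [div_le_iff₀ hC]
    have hz : z^(n+1) = (z/4)^(n+1) * 4^(n+1) := by rw [div_pow]; field_simp
    rw [hz]
    have hp : (0:ℝ) ≤ (z/4)^(n+1) := by positivity
    nlinarith [mul_le_mul_of_nonneg_left h4' hp]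

private theorem icb_pointwise (z : ℝ) (hz0 : 0 < z) (hz4 : z < 4) (t : ℝ)
    (ht : t ∈ Set.Ioc (0:ℝ) 1) :
    ∑' n : ℕ, ((n:ℝ)+1) * z^(n+1) * (t^n * (1-t)^(n+1)) = z*(1-t)/(1-z*t*(1-t))^2 := by
  obtain ⟨ht0, ht1⟩ := ht
  set r := z*t*(1-t) with hr
  have hr0 : 0 ≤ r := by rw [hr]; exact mul_nonneg (mul_nonneg hz0.le ht0.le) (by linarith)
  have hr1 : r < 1 := by rw [hr]; nlinarith [sq_nonneg (2*t-1)]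
  have hnorm : ‖r‖ < 1 := by rw [Real.norm_eq_abs, abs_of_nonneg hr0]; exact hr1
  have h1 : HasSum (fun n : ℕ => (n:ℝ) * r^n) (r/(1-r)^2) :=
    hasSum_coe_mul_geometric_of_norm_lt_one hnorm
  have h2 : HasSum (fun n : ℕ => r^n) (1/(1-r)) := by
    simpa [one_div] using hasSum_geometric_of_norm_lt_one hnorm
  have h3 : HasSum (fun n : ℕ => ((n:ℝ)+1) * r^n) (1/(1-r)^2) := by
    have := h1.add h2
    have heq : r/(1-r)^2 + 1/(1-r) = 1/(1-r)^2 := by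
      have : (1:ℝ) - r ≠ 0 := by linarith
      field_simp
      ring
    rw [heq] at this
    rw [show (fun n : ℕ => ((n:ℝ)+1)*r^n) = (fun n : ℕ => (n:ℝ)*r^n + r^n) from funext fun n => by ring]
    exact this
  have h4 : HasSum (fun n : ℕ => (z*(1-t)) * (((n:ℝ)+1) * r^n)) ((z*(1-t)) * (1/(1-r)^2)) :=
    h3.mul_left _
  have h5 : (fun n : ℕ => (z*(1-t)) * (((n:ℝ)+1) * r^n)) = fun n : ℕ => ((n:ℝ)+1) * z^(n+1) * (t^n * (1-t)^(n+1)) := by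
    funext n
    rw [hr, mul_pow, mul_pow]
    ring
  rw [h5] at h4
  rw [h4.tsum_eq, hr]
  field_simp

set_option maxHeartbeats 1000000 in
private theorem icb_integral (z : ℝ) (hz0 : 0 < z) (hz4 : z < 4) :
    ∫ t in (0:ℝ)..1, z*(1-t)/(1-z*t*(1-t))^2
      = z/(4-z) + (4*z/((4-z)*Real.sqrt (z*(4-z)))) * Real.arctan (z/Real.sqrt (z*(4-z))) := by
  set s := Real.sqrt (z*(4-z)) with hs_def
  have hD : (0:ℝ) < z*(4-z) := by nlinarith
  have hs : 0 < s := Real.sqrt_pos.2 hD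
  have hs2 : s^2 = z*(4-z) := Real.sq_sqrt hD.le
  have h4z : (0:ℝ) < 4 - z := by linarith
  set F : ℝ → ℝ := fun t => 1/(2*(1-z*t+z*t^2)) + z*(2*t-1)/(2*(4-z)*(1-z*t+z*t^2))
      + (2*z/((4-z)*s)) * Real.arctan (z*(2*t-1)/s) with hF
  have hq : ∀ t ∈ Set.uIcc (0:ℝ) 1, 0 < 1-z*t+z*t^2 := by
    intro t ht
    rw [Set.uIcc_of_le zero_le_one] at ht
    obtain ⟨h0, h1⟩ := ht
    nlinarith [sq_nonneg (2*t-1), sq_nonneg t]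
  have hderiv : ∀ t ∈ Set.uIcc (0:ℝ) 1, HasDerivAt F (z*(1-t)/(1-z*t*(1-t))^2) t := by
    intro t ht
    have hqt := hq t ht
    have hqne : (1-z*t+z*t^2) ≠ 0 := ne_of_gt hqt
    have hq' : HasDerivAt (fun t : ℝ => 1-z*t+z*t^2) (-z + z*(2*t)) t := by
      have : HasDerivAt (fun t : ℝ => 1-z*t+z*t^2) (0 - z*1 + z*(2*t^1)) t :=
        ((hasDerivAt_const t (1:ℝ)).sub ((hasDerivAt_id t).const_mul z)).add
          (((hasDerivAt_pow 2 t)).const_mul z)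
      simpa using this
    have h1 : HasDerivAt (fun t : ℝ => 1/(2*(1-z*t+z*t^2)))
        ((0 * (2*(1-z*t+z*t^2)) - 1 * (2*(-z + z*(2*t)))) / (2*(1-z*t+z*t^2))^2) t :=
      (hasDerivAt_const t (1:ℝ)).div (hq'.const_mul 2) (by positivity)
    have h2 : HasDerivAt (fun t : ℝ => z*(2*t-1)/(2*(4-z)*(1-z*t+z*t^2)))
        ((z*2 * (2*(4-z)*(1-z*t+z*t^2)) - z*(2*t-1) * (2*(4-z)*(-z + z*(2*t))))
          / (2*(4-z)*(1-z*t+z*t^2))^2) t := by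
      have hnum : HasDerivAt (fun t : ℝ => z*(2*t-1)) (z*2) t := by
        have : HasDerivAt (fun t : ℝ => 2*t-1) 2 t := by
          simpa using ((hasDerivAt_id t).const_mul 2).sub_const 1
        simpa [mul_comm] using this.const_mul z
      exact hnum.div (hq'.const_mul (2*(4-z))) (by positivity)
    have hu : HasDerivAt (fun t : ℝ => z*(2*t-1)/s) (z*2/s) t := by
      have : HasDerivAt (fun t : ℝ => z*(2*t-1)) (z*2) t := by
        simpa [mul_comm] using (((hasDerivAt_id t).const_mul 2).sub_const 1).const_mul z
      exact this.div_const s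
    have h3 : HasDerivAt (fun t : ℝ => (2*z/((4-z)*s)) * Real.arctan (z*(2*t-1)/s))
        ((2*z/((4-z)*s)) * ((1/(1+(z*(2*t-1)/s)^2)) * (z*2/s))) t :=
      (((Real.hasDerivAt_arctan (z*(2*t-1)/s)).comp t hu)).const_mul (2*z/((4-z)*s))
    have hzne := ne_of_gt hz0
    have h4ne := ne_of_gt h4z
    have hsne := ne_of_gt hs
    have e1 : (2*z/((4-z)*s)) * ((1/(1+(z*(2*t-1)/s)^2)) * (z*2/s)) = z/((4-z)*(1-z*t+z*t^2)) := by
      have hden2 : s^2+(z*(2*t-1))^2 = 4*z*(1-z*t+z*t^2) := by rw [hs2]; ring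
      have h1p : 1+(z*(2*t-1)/s)^2 = (4*z*(1-z*t+z*t^2))/s^2 := by
        rw [← hden2]; field_simp
      rw [h1p, one_div_div, pow_two]
      field_simp
      ring
    have key : ((0 * (2*(1-z*t+z*t^2)) - 1 * (2*(-z + z*(2*t)))) / (2*(1-z*t+z*t^2))^2)
        + ((z*2 * (2*(4-z)*(1-z*t+z*t^2)) - z*(2*t-1) * (2*(4-z)*(-z + z*(2*t))))
          / (2*(4-z)*(1-z*t+z*t^2))^2)
        + ((2*z/((4-z)*s)) * ((1/(1+(z*(2*t-1)/s)^2)) * (z*2/s)))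
        = z*(1-t)/(1-z*t*(1-t))^2 := by
      rw [e1]
      have hq2 : (1-z*t*(1-t)) = (1-z*t+z*t^2) := by ring
      rw [hq2]
      field_simp
      ring
    rw [← key]
    exact (h1.add h2).add h3
  have hcont : IntervalIntegrable (fun t => z*(1-t)/(1-z*t*(1-t))^2) MeasureTheory.volume 0 1 := by
    apply ContinuousOn.intervalIntegrable
    apply ContinuousOn.div
    · fun_prop
    · fun_prop
    · intro t ht
      have := hq t ht
      have h2 : (1-z*t*(1-t)) = (1-z*t+z*t^2) := by ring
      rw [h2]
      positivity
  have := intervalIntegral.integral_eq_sub_of_hasDerivAt hderiv hcont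
  rw [this, hF]
  simp only []
  have harc : Real.arctan (z*(2*(0:ℝ)-1)/s) = - Real.arctan (z/s) := by
    rw [show z*(2*(0:ℝ)-1)/s = -(z/s) by ring, Real.arctan_neg]
  have harc1 : Real.arctan (z*(2*(1:ℝ)-1)/s) = Real.arctan (z/s) := by norm_num
  rw [harc, harc1]
  have hzne := ne_of_gt hz0
  have h4ne := ne_of_gt h4z
  have hsne := ne_of_gt hs
  field_simp
  ring

theorem inverse_central_binomial_sum (z : ℝ) (hz0 : 0 < z) (hz4 : z < 4) :
    (∑' n : ℕ, z ^ (n + 1) / (Nat.choose (2 * (n + 1)) (n + 1))) =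
      z / (4 - z) +
        4 * Real.sqrt z / (4 - z) ^ ((3 : ℝ) / 2) * Real.arcsin (Real.sqrt z / 2) := by
  classical
  set μ := MeasureTheory.volume.restrict (Set.Ioc (0:ℝ) 1) with hμ
  set G : ℕ → ℝ → ℝ := fun n t => ((n:ℝ)+1) * z^(n+1) * (t^n * (1-t)^(n+1)) with hG
  have hGint : ∀ n, MeasureTheory.Integrable (G n) μ := by
    intro n
    rw [hμ]
    apply MeasureTheory.Integrable.mono_measure _
      (MeasureTheory.Measure.restrict_mono Set.Ioc_subset_Icc_self le_rfl)
    exact (Continuous.continuousOn (by continuity)).integrableOn_compact isCompact_Icc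
  have hGnn : ∀ n, ∀ t ∈ Set.Ioc (0:ℝ) 1, 0 ≤ G n t := by
    intro n t ht
    obtain ⟨ht0, ht1⟩ := ht
    have : (0:ℝ) ≤ 1 - t := by linarith
    rw [hG]
    positivity
  have hnormint : ∀ n, (∫ t, ‖G n t‖ ∂μ) = z^(n+1) / (Nat.choose (2*(n+1)) (n+1) : ℝ) := by
    intro n
    rw [hμ, ← icb_term_eq z n]
    apply MeasureTheory.setIntegral_congr_fun measurableSet_Ioc
    intro t ht
    exact Real.norm_of_nonneg (hGnn n t ht)
  have hsum : Summable (fun n => ∫ t, ‖G n t‖ ∂μ) := by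
    rw [show (fun n => ∫ t, ‖G n t‖ ∂μ) = fun n => z^(n+1) / (Nat.choose (2*(n+1)) (n+1) : ℝ)
      from funext hnormint]
    exact icb_summable z hz0 hz4
  have hinter := MeasureTheory.integral_tsum_of_summable_integral_norm hGint hsum
  have hterm : ∀ n : ℕ, (∫ t, G n t ∂μ) = z^(n+1) / (Nat.choose (2*(n+1)) (n+1) : ℝ) := by
    intro n
    rw [hμ]
    exact icb_term_eq z n
  have hlhs : (∑' n : ℕ, z ^ (n + 1) / (Nat.choose (2 * (n + 1)) (n + 1) : ℝ))
      = ∫ t, (∑' n, G n t) ∂μ := by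
    rw [← hinter]
    exact tsum_congr fun n => (hterm n).symm
  rw [hlhs]
  have hptw : ∫ t, (∑' n, G n t) ∂μ = ∫ t, z*(1-t)/(1-z*t*(1-t))^2 ∂μ := by
    rw [hμ]
    apply MeasureTheory.setIntegral_congr_fun measurableSet_Ioc
    intro t ht
    exact icb_pointwise z hz0 hz4 t ht
  rw [hptw, hμ, ← intervalIntegral.integral_of_le zero_le_one, icb_integral z hz0 hz4]
  -- final algebra
  have h4z : (0:ℝ) < 4 - z := by linarith
  have hsz : (0:ℝ) < Real.sqrt z := Real.sqrt_pos.2 hz0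
  have hs4 : (0:ℝ) < Real.sqrt (4-z) := Real.sqrt_pos.2 h4z
  have hsplit : Real.sqrt (z*(4-z)) = Real.sqrt z * Real.sqrt (4-z) := Real.sqrt_mul hz0.le _
  have hszq : Real.sqrt z ^ 2 = z := Real.sq_sqrt hz0.le
  have hs4q : Real.sqrt (4-z) ^ 2 = 4 - z := Real.sq_sqrt h4z.le
  have harg : z/Real.sqrt (z*(4-z)) = Real.sqrt z / Real.sqrt (4-z) := by
    rw [hsplit]
    rw [div_eq_div_iff (ne_of_gt (mul_pos hsz hs4)) (ne_of_gt hs4)]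
    linear_combination (-Real.sqrt (4-z)) * hszq
  have harctan : Real.arctan (Real.sqrt z / Real.sqrt (4-z)) = Real.arcsin (Real.sqrt z / 2) := by
    rw [Real.arctan_eq_arcsin]
    congr 1
    have h1 : 1 + (Real.sqrt z / Real.sqrt (4-z))^2 = 4 / (4-z) := by
      rw [div_pow, hszq, hs4q]; field_simp; ring
    rw [h1, Real.sqrt_div (by norm_num : (0:ℝ) ≤ 4),
      show Real.sqrt 4 = 2 by rw [show (4:ℝ) = 2^2 by norm_num, Real.sqrt_sq (by norm_num : (0:ℝ) ≤ 2)]]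
    field_simp
  have hrpow : (4-z) ^ ((3:ℝ)/2) = (4-z) * Real.sqrt (4-z) := by
    rw [show (3:ℝ)/2 = 1 + 1/2 by norm_num, Real.rpow_add h4z, Real.rpow_one,
      ← Real.sqrt_eq_rpow]
  have hco : 4*z/((4-z)*Real.sqrt (z*(4-z))) = 4 * Real.sqrt z / (4-z) ^ ((3:ℝ)/2) := by
    rw [hrpow, hsplit]
    rw [div_eq_div_iff (ne_of_gt (mul_pos h4z (mul_pos hsz hs4))) (ne_of_gt (mul_pos h4z hs4))]
    linear_combination (4*z - 16) * Real.sqrt (4-z) * hszq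
  rw [harg, harctan, hco]
end

section
/- Let k be a nonnegative integer and let z be a real number with 0 < z < 4. Then S_k(z) = \int_0^1 \frac{1}{t} \Big( \sum_{m=1}^{\infty} m^{k+1} (z t (1-t))^m \Big) \, dt, where the series under the integral converges for every t \in (0,1) since 0 \le z t(1-t) \le z/4 < 1. -/
open scoped BigOperators

/-- `S k z = ∑_{n=1}^∞ n^k z^n / C(2n,n)`. -/
noncomputable def aperySeries (k : ℕ) (z : ℝ) : ℝ :=
  ∑' n : ℕ, ((n : ℝ) + 1) ^ k * z ^ (n + 1) / (Nat.choose (2 * (n + 1)) (n + 1))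

/-- Stirling numbers of the second kind:
`S(k,j) = (-1)^j / j! * ∑_{m=0}^j (-1)^m m^k C(j,m)`. -/
noncomputable def stirling2 (k j : ℕ) : ℝ :=
  (-1 : ℝ) ^ j / (Nat.factorial j) *
    ∑ m ∈ Finset.range (j + 1), (-1 : ℝ) ^ m * (m : ℝ) ^ k * (Nat.choose j m)

/-- Pochhammer (ascending factorial): `(a)_n = a (a+1) ⋯ (a+n-1)`. -/
noncomputable def poch (a : ℝ) (n : ℕ) : ℝ :=
  ∏ i ∈ Finset.range n, (a + i)

open MeasureTheory in

private lemma fact_prod_aux (a n : ℕ) :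
    a.factorial * ∏ j ∈ Finset.range n, (a + 1 + j) = (a + n).factorial := by
  induction n with
  | zero => simp
  | succ n ih =>
    rw [Finset.prod_range_succ, ← mul_assoc, ih]
    rw [show a + (n+1) = (a + n) + 1 by ring, Nat.factorial_succ]
    ring

private lemma beta_nat_integral (m : ℕ) :
    (∫ t in (0:ℝ)..1, t ^ m * (1 - t) ^ (m + 1))
      = (m.factorial * (m + 1).factorial : ℝ) / ((2 * m + 2).factorial) := by
  have hu : 0 < Complex.re ((m : ℂ) + 1) := by
    simp only [Complex.add_re, Complex.natCast_re, Complex.one_re]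
    positivity
  have hB := Complex.betaIntegral_eval_nat_add_one_right hu (m + 1)
  have hprod : (∏ j ∈ Finset.range (m + 1 + 1), ((m : ℂ) + 1 + (j : ℂ)))
      = ((∏ j ∈ Finset.range (m + 2), (m + 1 + j) : ℕ) : ℂ) := by
    push_cast
    ring_nf
  have hfact : (m.factorial * ∏ j ∈ Finset.range (m + 2), (m + 1 + j) : ℕ)
      = (2 * m + 2).factorial := by
    have := fact_prod_aux m (m + 2)
    rwa [show m + (m + 2) = 2 * m + 2 by ring] at this
  -- compute the beta integral as the complexification of the real integral
  have hleft : Complex.betaIntegral ((m : ℂ) + 1) ((m + 1 : ℕ) + 1)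
      = ((∫ t in (0:ℝ)..1, t ^ m * (1 - t) ^ (m + 1) : ℝ) : ℂ) := by
    rw [Complex.betaIntegral, ← intervalIntegral.integral_ofReal]
    apply intervalIntegral.integral_congr
    intro x _
    have h1 : (m : ℂ) + 1 - 1 = ((m : ℕ) : ℂ) := by ring
    have h2 : ((m + 1 : ℕ) : ℂ) + 1 - 1 = ((m + 1 : ℕ) : ℂ) := by ring
    simp only [h1, h2, Complex.cpow_natCast]
    push_cast
    ring
  rw [hleft, hprod] at hB
  have h2m : ((2 * m + 2).factorial : ℂ) ≠ 0 := by
    exact_mod_cast Nat.factorial_ne_zero _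
  have hmf : ((m.factorial : ℕ) : ℂ) ≠ 0 := by
    exact_mod_cast Nat.factorial_ne_zero _
  have hP : ((∏ j ∈ Finset.range (m + 2), (m + 1 + j) : ℕ) : ℂ)
      = ((2 * m + 2).factorial : ℂ) / (m.factorial : ℂ) := by
    rw [eq_div_iff hmf]
    exact_mod_cast (by rw [mul_comm]; exact hfact : (∏ j ∈ Finset.range (m + 2), (m + 1 + j) : ℕ) * m.factorial = (2 * m + 2).factorial)
  rw [hP] at hB
  have : ((∫ t in (0:ℝ)..1, t ^ m * (1 - t) ^ (m + 1) : ℝ) : ℂ)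
      = ((m.factorial * (m + 1).factorial : ℝ) / ((2 * m + 2).factorial) : ℝ) := by
    rw [hB]
    push_cast
    field_simp
  exact_mod_cast this

open MeasureTheory in
theorem apery_series_eq_integral (k : ℕ) (z : ℝ) (hz0 : 0 < z) (hz4 : z < 4) :
    aperySeries k z =
      ∫ t in (0:ℝ)..1,
        (1 / t) * ∑' m : ℕ, ((m : ℝ) + 1) ^ (k + 1) * (z * t * (1 - t)) ^ (m + 1) := by
  set g : ℕ → ℝ → ℝ :=
    fun m t => ((m : ℝ) + 1) ^ (k + 1) * z ^ (m + 1) * (t ^ m * (1 - t) ^ (m + 1)) with hg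
  have hcont : ∀ m, Continuous (g m) := by
    intro m; fun_prop
  have hint : ∀ m, IntegrableOn (g m) (Set.Ioc (0:ℝ) 1) volume :=
    fun m => (hcont m).integrableOn_Ioc
  -- exact value of each integral
  have hval : ∀ m : ℕ, (∫ t in Set.Ioc (0:ℝ) 1, g m t)
      = ((m : ℝ) + 1) ^ k * z ^ (m + 1) / (Nat.choose (2 * (m + 1)) (m + 1)) := by
    intro m
    rw [← intervalIntegral.integral_of_le zero_le_one]
    have : (∫ t in (0:ℝ)..1, g m t)
        = ((m : ℝ) + 1) ^ (k + 1) * z ^ (m + 1) * ∫ t in (0:ℝ)..1, t ^ m * (1 - t) ^ (m + 1) := by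
      rw [← intervalIntegral.integral_const_mul]
    rw [this, beta_nat_integral m]
    have hch := Nat.choose_mul_factorial_mul_factorial (show m + 1 ≤ 2 * (m + 1) by omega)
    have h2 : 2 * (m + 1) - (m + 1) = m + 1 := by omega
    rw [h2] at hch
    have hch' : ((Nat.choose (2 * (m + 1)) (m + 1) : ℝ)) * (m + 1).factorial * (m + 1).factorial
        = ((2 * m + 2).factorial : ℝ) := by
      rw [show 2 * m + 2 = 2 * (m + 1) by ring]
      exact_mod_cast hch
    have hc0 : ((Nat.choose (2 * (m + 1)) (m + 1) : ℝ)) ≠ 0 := by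
      exact_mod_cast Nat.choose_pos (show m + 1 ≤ 2 * (m + 1) by omega) |>.ne'
    have hf0 : ((m + 1).factorial : ℝ) ≠ 0 := by exact_mod_cast Nat.factorial_ne_zero _
    have hf1 : ((2 * m + 2).factorial : ℝ) ≠ 0 := by exact_mod_cast Nat.factorial_ne_zero _
    have hfm : ((m.factorial : ℝ)) ≠ 0 := by exact_mod_cast Nat.factorial_ne_zero _
    have hsucc : ((m + 1).factorial : ℝ) = ((m : ℝ) + 1) * m.factorial := by
      rw [Nat.factorial_succ]; push_cast; ring
    field_simp
    rw [← hch', hsucc]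
    ring
  -- summability of the integrals of norms
  have hr : ‖z / 4‖ < 1 := by
    rw [Real.norm_eq_abs, abs_of_pos (by positivity)]; linarith
  have hsum0 : Summable (fun m : ℕ => (m : ℝ) ^ (k + 1) * (z / 4) ^ m) :=
    summable_pow_mul_geometric_of_norm_lt_one (k + 1) hr
  have hsumb : Summable (fun m : ℕ => 4 * (((m : ℝ) + 1) ^ (k + 1) * (z / 4) ^ (m + 1))) := by
    apply Summable.mul_left
    have := hsum0.comp_injective (add_left_injective 1)
    apply this.congr
    intro m
    simp [Function.comp]
  have hnormle : ∀ m : ℕ, (∫ t in Set.Ioc (0:ℝ) 1, ‖g m t‖)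
      ≤ 4 * (((m : ℝ) + 1) ^ (k + 1) * (z / 4) ^ (m + 1)) := by
    intro m
    have hb : ∀ t ∈ Set.Ioc (0:ℝ) 1, ‖g m t‖
        ≤ ((m : ℝ) + 1) ^ (k + 1) * z ^ (m + 1) * (1 / 4) ^ m := by
      intro t ht
      obtain ⟨ht0, ht1⟩ := ht
      have h1t : 0 ≤ 1 - t := by linarith
      have hgt : 0 ≤ g m t := by positivity
      rw [Real.norm_of_nonneg hgt, hg]
      have key : t ^ m * (1 - t) ^ (m + 1) ≤ (1 / 4) ^ m := by
        have h4 : t * (1 - t) ≤ 1 / 4 := by nlinarith [sq_nonneg (t - 1/2)]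
        calc t ^ m * (1 - t) ^ (m + 1) = (t * (1 - t)) ^ m * (1 - t) := by rw [mul_pow]; ring
          _ ≤ (1 / 4) ^ m * 1 := by
              apply mul_le_mul _ (by linarith) h1t (by positivity)
              exact pow_le_pow_left₀ (by positivity) h4 m
          _ = (1 / 4) ^ m := by ring
      have hc : 0 ≤ ((m : ℝ) + 1) ^ (k + 1) * z ^ (m + 1) := by positivity
      exact mul_le_mul_of_nonneg_left key hc
    calc (∫ t in Set.Ioc (0:ℝ) 1, ‖g m t‖)
        ≤ ∫ _ in Set.Ioc (0:ℝ) 1, ((m : ℝ) + 1) ^ (k + 1) * z ^ (m + 1) * (1 / 4) ^ m := by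
          apply setIntegral_mono_on (hint m).norm (integrableOn_const (by simp) enorm_ne_top)
            measurableSet_Ioc hb
      _ = ((m : ℝ) + 1) ^ (k + 1) * z ^ (m + 1) * (1 / 4) ^ m := by
          rw [setIntegral_const]; simp
      _ = 4 * (((m : ℝ) + 1) ^ (k + 1) * (z / 4) ^ (m + 1)) := by
          rw [div_pow]
          field_simp
          have h4m : (4:ℝ) ^ m ≠ 0 := by positivity
          rw [one_pow, div_pow, pow_succ (4:ℝ) m]; field_simp
  have hFsum : Summable (fun m : ℕ => ∫ t in Set.Ioc (0:ℝ) 1, ‖g m t‖) := by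
    apply Summable.of_nonneg_of_le _ hnormle hsumb
    intro m
    exact integral_nonneg fun t => norm_nonneg _
  -- swap sum and integral
  have hswap := MeasureTheory.integral_tsum_of_summable_integral_norm
    (μ := volume.restrict (Set.Ioc (0:ℝ) 1)) hint hFsum
  -- pointwise identity on Ioc
  have hpw : ∀ t ∈ Set.Ioc (0:ℝ) 1,
      (1 / t) * (∑' m : ℕ, ((m : ℝ) + 1) ^ (k + 1) * (z * t * (1 - t)) ^ (m + 1))
        = ∑' m : ℕ, g m t := by
    intro t ht
    have ht0 : t ≠ 0 := ne_of_gt ht.1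
    rw [← tsum_mul_left]
    apply tsum_congr
    intro m
    rw [hg]
    have : (z * t * (1 - t)) ^ (m + 1) = z ^ (m + 1) * (t * t ^ m) * (1 - t) ^ (m + 1) := by
      rw [mul_pow, mul_pow]; ring
    rw [this]
    field_simp
  calc aperySeries k z = ∑' m : ℕ, ∫ t in Set.Ioc (0:ℝ) 1, g m t := by
        rw [aperySeries]
        exact tsum_congr fun m => (hval m).symm
    _ = ∫ t in Set.Ioc (0:ℝ) 1, ∑' m : ℕ, g m t := hswap
    _ = ∫ t in Set.Ioc (0:ℝ) 1,
          (1 / t) * ∑' m : ℕ, ((m : ℝ) + 1) ^ (k + 1) * (z * t * (1 - t)) ^ (m + 1) := by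
        apply setIntegral_congr_fun measurableSet_Ioc
        intro t ht
        exact (hpw t ht).symm
    _ = ∫ t in (0:ℝ)..1,
          (1 / t) * ∑' m : ℕ, ((m : ℝ) + 1) ^ (k + 1) * (z * t * (1 - t)) ^ (m + 1) :=
        (intervalIntegral.integral_of_le zero_le_one).symm
end

section
/- Let k be a nonnegative integer and let z be a real number with 0 < z < 4. Then S_k(z) = \sum_{n=1}^{k+1} \sum_{m=1}^{n} (-1)^{m+n} \binom{n}{m} m^{k+1} \int_0^1 \frac{1}{t} \frac{(z t (1-t))^n}{(1 - z t (1-t))^{n+1}} \, dt. -/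
open scoped BigOperators


open Finset MeasureTheory
open scoped fwdDiff

-- forward differences of x^K vanish for n > K
lemma fwdDiff_pow_vanish : ∀ (K : ℕ) (n : ℕ), K < n → ∀ y : ℕ,
    ((Δ_[(1:ℕ)])^[n] (fun x : ℕ => (x : ℝ) ^ K)) y = 0 := by
  intro K
  induction K using Nat.strong_induction_on with
  | _ K IH =>
    intro n hn y
    obtain ⟨n, rfl⟩ : ∃ m, n = m + 1 := ⟨n - 1, by omega⟩
    rw [Function.iterate_succ_apply]
    have hd : Δ_[1] (fun x : ℕ => (x : ℝ) ^ K) =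
        ∑ j ∈ Finset.range K, fun x : ℕ => (K.choose j : ℝ) * (x : ℝ) ^ j := by
      funext x
      simp only [fwdDiff, Finset.sum_apply]
      push_cast
      rw [add_pow]
      rw [Finset.sum_range_succ]
      simp [mul_comm]
    rw [hd, fwdDiff_iter_finset_sum]
    rw [Finset.sum_apply]
    refine Finset.sum_eq_zero fun j hj => ?_
    simp only [Finset.mem_range] at hj
    have : (fun x : ℕ => (K.choose j : ℝ) * (x:ℝ) ^ j)
        = (K.choose j : ℝ) • (fun x : ℕ => (x:ℝ) ^ j) := by
      funext x; simp [smul_eq_mul]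
    rw [this, fwdDiff_iter_const_smul]
    have := IH j hj n (by omega) y
    simp [this]

lemma inner_sum_eq_fwdDiff (K n : ℕ) (hK : 1 ≤ K) :
    ∑ m ∈ Icc 1 n, (-1:ℝ)^(m+n) * (n.choose m) * (m:ℝ)^K
      = (Δ_[(1:ℕ)])^[n] (fun x : ℕ => (x : ℝ) ^ K) 0 := by
  rw [fwdDiff_iter_eq_sum_shift]
  rw [show Finset.range (n+1) = Finset.Icc 0 n by rw [← Nat.Ico_zero_eq_range, Finset.Ico_add_one_right_eq_Icc]]
  rw [← Finset.sum_subset (Finset.Icc_subset_Icc_left (Nat.zero_le 1))]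
  · refine Finset.sum_congr rfl fun m hm => ?_
    simp only [Finset.mem_Icc] at hm
    have hs : m + n = (n - m) + 2 * m := by omega
    rw [hs, pow_add, pow_mul, neg_one_sq, one_pow, mul_one]
    rw [zsmul_eq_mul]
    push_cast
    ring_nf
  · intro m hm hm'
    simp only [Finset.mem_Icc] at hm hm'
    have : m = 0 := by omega
    subst this
    simp [zero_pow (by omega : K ≠ 0)]

lemma coeff_identity (K N : ℕ) (hK : 1 ≤ K) :
    ∑ n ∈ Icc 1 K, (∑ m ∈ Icc 1 n, (-1:ℝ)^(m+n) * (n.choose m) * (m:ℝ)^K) * (N.choose n : ℝ)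
      = (N:ℝ)^K := by
  set f : ℕ → ℝ := fun x => (x:ℝ)^K with hf
  set T : ℕ → ℝ := fun n => (Δ_[(1:ℕ)])^[n] f 0 with hT
  have h1 : ∀ n : ℕ, ∑ m ∈ Icc 1 n, (-1:ℝ)^(m+n) * (n.choose m) * (m:ℝ)^K = T n :=
    fun n => inner_sum_eq_fwdDiff K n hK
  have h2 : (N:ℝ)^K = ∑ j ∈ Finset.range (N+1), (N.choose j : ℝ) * T j := by
    have := shift_eq_sum_fwdDiff_iter (1:ℕ) f N 0
    simp only [zero_add, smul_eq_mul, nsmul_eq_mul] at this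
    simpa [hf, hT] using this
  have hTz : ∀ n, K < n → T n = 0 := fun n hn => fwdDiff_pow_vanish K n hn 0
  have hT0 : T 0 = 0 := by simp [hT, hf, zero_pow (by omega : K ≠ 0)]
  set M := max K N with hM
  have e1 : ∑ j ∈ Finset.range (N+1), (N.choose j : ℝ) * T j
      = ∑ j ∈ Finset.range (M+1), (N.choose j : ℝ) * T j := by
    refine Finset.sum_subset (by intro x hx; simp only [Finset.mem_range] at *; omega) ?_
    intro j hj hj'
    simp only [Finset.mem_range] at hj hj'
    rw [Nat.choose_eq_zero_of_lt (by omega)]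
    simp
  have e2 : ∑ n ∈ Icc 1 K, T n * (N.choose n : ℝ)
      = ∑ j ∈ Finset.range (M+1), (N.choose j : ℝ) * T j := by
    rw [← Finset.sum_subset (show Icc 1 K ⊆ Finset.range (M+1) by
      intro x hx; simp only [Finset.mem_Icc, Finset.mem_range] at *; omega)]
    · exact Finset.sum_congr rfl fun n _ => mul_comm _ _
    · intro j hj hj'
      simp only [Finset.mem_range, Finset.mem_Icc] at hj hj'
      rcases Nat.eq_zero_or_pos j with h | h
      · subst h; simp [hT0]
      · rw [hTz j (by omega)]; simp
  calc ∑ n ∈ Icc 1 K, (∑ m ∈ Icc 1 n, (-1:ℝ)^(m+n) * (n.choose m) * (m:ℝ)^K) * (N.choose n : ℝ)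
      = ∑ n ∈ Icc 1 K, T n * (N.choose n : ℝ) := by
        refine Finset.sum_congr rfl fun n _ => by rw [h1]
    _ = (N:ℝ)^K := by rw [e2, ← e1, h2]

lemma prod_range_add_eq_ascFactorial (n k : ℕ) :
    ∏ j ∈ Finset.range k, (n + j) = n.ascFactorial k := by
  induction k with
  | zero => simp
  | succ k ih => rw [Finset.prod_range_succ, ih, Nat.ascFactorial_succ, mul_comm]

lemma beta_nat_s6 (n : ℕ) (hn : 1 ≤ n) :
    ∫ t in (0:ℝ)..1, t^(n-1) * (1-t)^n
      = ((n-1).factorial : ℝ) * (n.factorial : ℝ) / ((2*n).factorial : ℝ) := by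
  have hasc : ((n-1).factorial) * (n.ascFactorial (n+1)) = (2*n).factorial := by
    have := Nat.factorial_mul_ascFactorial' n (n+1) (by omega)
    rw [this]
    congr 1
    omega
  have hB := Complex.betaIntegral_eval_nat_add_one_right
    (u := (n:ℂ)) (by simpa using (by exact_mod_cast hn : (0:ℝ) < n)) n
  rw [Complex.betaIntegral] at hB
  have hint : (∫ x in (0:ℝ)..1, (x:ℂ) ^ ((n:ℂ) - 1) * (1 - (x:ℂ)) ^ ((n:ℂ) + 1 - 1))
      = ((∫ t in (0:ℝ)..1, t^(n-1) * (1-t)^n : ℝ) : ℂ) := by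
    rw [← intervalIntegral.integral_ofReal]
    refine intervalIntegral.integral_congr fun x _ => ?_
    have h1 : ((n:ℂ) - 1) = ((n - 1 : ℕ) : ℂ) := by
      push_cast [Nat.cast_sub hn]; ring
    have h2 : ((n:ℂ) + 1 - 1) = ((n : ℕ) : ℂ) := by ring
    rw [h1, h2, Complex.cpow_natCast, Complex.cpow_natCast]
    push_cast
    ring
  have hprod : (∏ j ∈ Finset.range (n+1), ((n:ℂ) + j)) = ((n.ascFactorial (n+1) : ℕ) : ℂ) := by
    rw [← prod_range_add_eq_ascFactorial]
    push_cast
    rfl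
  rw [hint, hprod] at hB
  have hB' : ((∫ t in (0:ℝ)..1, t^(n-1) * (1-t)^n : ℝ) : ℂ)
      = (((n.factorial : ℝ) / (n.ascFactorial (n+1) : ℝ) : ℝ) : ℂ) := by
    rw [hB]; push_cast; ring
  have := Complex.ofReal_inj.mp hB'
  rw [this]
  have hne : ((n.ascFactorial (n+1) : ℕ) : ℝ) ≠ 0 := by
    have : 0 < n.ascFactorial (n+1) := by
      obtain ⟨m, rfl⟩ : ∃ m, n = m + 1 := ⟨n - 1, by omega⟩
      exact Nat.ascFactorial_pos m _
    positivity
  have h2 : ((2*n).factorial : ℝ) = ((n-1).factorial : ℝ) * (n.ascFactorial (n+1) : ℝ) := by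
    exact_mod_cast congrArg (fun x : ℕ => (x : ℝ)) hasc.symm
  rw [h2]
  field_simp

lemma hasSum_choose_pow {x : ℝ} (hx0 : 0 ≤ x) (hx1 : x < 1) (n : ℕ) :
    HasSum (fun N : ℕ => (N.choose n : ℝ) * x ^ N) (x^n / (1-x)^(n+1)) := by
  have hnorm : ‖x‖ < 1 := by rwa [Real.norm_eq_abs, abs_of_nonneg hx0]
  have h := (hasSum_choose_mul_geometric_of_norm_lt_one n hnorm).mul_left (x^n)
  have h2 : (fun j : ℕ => x^n * (((j+n).choose n : ℝ) * x ^ j))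
      = (fun N : ℕ => (N.choose n : ℝ) * x ^ N) ∘ (fun j => j + n) := by
    funext j
    simp only [Function.comp_apply, pow_add]
    ring
  rw [h2] at h
  rw [mul_one_div] at h
  refine (Function.Injective.hasSum_iff (add_left_injective n) fun N hN => ?_).mp h
  have : N < n := by
    by_contra hc
    exact hN ⟨N - n, by simp; omega⟩
  rw [Nat.choose_eq_zero_of_lt this]
  simp

lemma series_identity {x : ℝ} (hx0 : 0 ≤ x) (hx1 : x < 1) (K : ℕ) (hK : 1 ≤ K) :
    ∑ n ∈ Icc 1 K, (∑ m ∈ Icc 1 n, (-1:ℝ)^(m+n) * (n.choose m) * (m:ℝ)^K)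
        * (x^n/(1-x)^(n+1))
      = ∑' N : ℕ, (N:ℝ)^K * x^N := by
  set T : ℕ → ℝ := fun n => ∑ m ∈ Icc 1 n, (-1:ℝ)^(m+n) * (n.choose m) * (m:ℝ)^K with hT
  have H : HasSum (fun N : ℕ => ∑ n ∈ Icc 1 K, T n * ((N.choose n : ℝ) * x ^ N))
      (∑ n ∈ Icc 1 K, T n * (x^n/(1-x)^(n+1))) :=
    hasSum_sum fun n _ => (hasSum_choose_pow hx0 hx1 n).mul_left (T n)
  have hfun : (fun N : ℕ => ∑ n ∈ Icc 1 K, T n * ((N.choose n : ℝ) * x ^ N))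
      = fun N : ℕ => (N:ℝ)^K * x^N := by
    funext N
    rcases Nat.eq_zero_or_pos N with rfl | hN
    · rw [Nat.cast_zero, zero_pow (by omega : K ≠ 0), zero_mul]
      refine Finset.sum_eq_zero fun n hn => ?_
      simp only [Finset.mem_Icc] at hn
      rw [Nat.choose_eq_zero_of_lt (by omega)]
      simp
    · have := coeff_identity K N hK
      calc ∑ n ∈ Icc 1 K, T n * ((N.choose n : ℝ) * x ^ N)
          = (∑ n ∈ Icc 1 K, T n * (N.choose n : ℝ)) * x ^ N := by
            rw [Finset.sum_mul]; exact Finset.sum_congr rfl fun n _ => by ring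
        _ = (N:ℝ)^K * x^N := by rw [this]
  rw [hfun] at H
  exact H.tsum_eq.symm

lemma nat_bound (N : ℕ) (hN : 1 ≤ N) :
    4^N * ((N-1).factorial * N.factorial) ≤ 3 * (2*N).factorial := by
  have h1 := Nat.four_pow_le_two_mul_add_one_mul_central_binom N
  have h2 : (2*N).choose N * (N.factorial * N.factorial) = (2*N).factorial := by
    have := Nat.choose_mul_factorial_mul_factorial (show N ≤ 2*N by omega)
    rw [show 2*N - N = N by omega] at this
    rw [← this]; ring
  have key : N * (4^N * ((N-1).factorial * N.factorial)) ≤ N * (3 * (2*N).factorial) := by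
    calc N * (4^N * ((N-1).factorial * N.factorial))
        = 4^N * ((N * (N-1).factorial) * N.factorial) := by ring
      _ = 4^N * (N.factorial * N.factorial) := by
          rw [← Nat.succ_pred_eq_of_pos (by omega : 0 < N)]; simp [Nat.factorial_succ]
      _ ≤ ((2*N+1) * (2*N).choose N) * (N.factorial * N.factorial) :=
          Nat.mul_le_mul_right _ h1
      _ = (2*N+1) * (2*N).factorial := by rw [mul_assoc, h2]
      _ ≤ (3*N) * (2*N).factorial := Nat.mul_le_mul_right _ (by omega)
      _ = N * (3 * (2*N).factorial) := by ring
  exact Nat.le_of_mul_le_mul_left key (by omega)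

lemma summable_c (K : ℕ) (hK : 1 ≤ K) {z : ℝ} (hz0 : 0 < z) (hz4 : z < 4) :
    Summable (fun N : ℕ => (N:ℝ)^K * z^N *
      (((N-1).factorial : ℝ) * (N.factorial : ℝ) / ((2*N).factorial : ℝ))) := by
  have hr : ‖z/4‖ < 1 := by
    rw [Real.norm_eq_abs, abs_of_pos (by positivity)]
    linarith
  refine Summable.of_nonneg_of_le (fun N => by positivity) (fun N => ?_)
    ((summable_pow_mul_geometric_of_norm_lt_one K hr).mul_left 3)
  rcases Nat.eq_zero_or_pos N with rfl | hN
  · simp [zero_pow (by omega : K ≠ 0)]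
  · have hb : ((N-1).factorial : ℝ) * (N.factorial : ℝ) / ((2*N).factorial : ℝ)
        ≤ 3 / 4^N := by
      rw [div_le_div_iff₀ (by positivity) (by positivity)]
      calc ((N-1).factorial : ℝ) * (N.factorial : ℝ) * 4^N
          = ((4^N * ((N-1).factorial * N.factorial) : ℕ) : ℝ) := by push_cast; ring
        _ ≤ ((3 * (2*N).factorial : ℕ) : ℝ) := by exact_mod_cast nat_bound N hN
        _ = 3 * ((2*N).factorial : ℝ) := by push_cast; ring
    calc (N:ℝ)^K * z^N * (((N-1).factorial : ℝ) * (N.factorial : ℝ) / ((2*N).factorial : ℝ))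
        ≤ (N:ℝ)^K * z^N * (3 / 4^N) := by
          refine mul_le_mul_of_nonneg_left hb (by positivity)
      _ = 3 * ((N:ℝ)^K * (z/4)^N) := by rw [div_pow]; ring

lemma integral_f (K : ℕ) (hK : 1 ≤ K) (z : ℝ) (N : ℕ) :
    ∫ t in Set.Ioc (0:ℝ) 1, ((N:ℝ)^K * z^N) * (t^(N-1) * (1-t)^N)
      = (N:ℝ)^K * z^N *
        (((N-1).factorial : ℝ) * (N.factorial : ℝ) / ((2*N).factorial : ℝ)) := by
  rw [integral_const_mul]
  rcases Nat.eq_zero_or_pos N with rfl | hN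
  · simp [zero_pow (by omega : K ≠ 0)]
  · congr 1
    rw [← intervalIntegral.integral_of_le zero_le_one]
    exact beta_nat_s6 N hN

lemma denom_pos {z : ℝ} (hz0 : 0 < z) (hz4 : z < 4) (t : ℝ) :
    0 < 1 - z*t*(1-t) := by
  have h14 : t*(1-t) ≤ 1/4 := by nlinarith [sq_nonneg (2*t-1)]
  rcases le_or_gt (t*(1-t)) 0 with h | h
  · nlinarith
  · nlinarith

theorem apery_series_eq_double_sum_integral' (k : ℕ) (z : ℝ) (hz0 : 0 < z) (hz4 : z < 4) :
    (∑' n : ℕ, ((n : ℝ) + 1) ^ k * z ^ (n + 1) / (Nat.choose (2 * (n + 1)) (n + 1))) =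
      ∑ n ∈ Finset.Icc 1 (k + 1), ∑ m ∈ Finset.Icc 1 n,
        (-1 : ℝ) ^ (m + n) * (Nat.choose n m) * (m : ℝ) ^ (k + 1) *
          ∫ t in (0:ℝ)..1,
            (1 / t) * ((z * t * (1 - t)) ^ n / (1 - z * t * (1 - t)) ^ (n + 1)) := by
  set K := k + 1 with hKdef
  have hK : 1 ≤ K := by omega
  set T : ℕ → ℝ := fun n => ∑ m ∈ Icc 1 n, (-1:ℝ)^(m+n) * (n.choose m) * (m:ℝ)^K with hT
  set G : ℕ → ℝ → ℝ := fun n t =>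
    (z^n * t^(n-1) * (1-t)^n) / (1 - z*t*(1-t))^(n+1) with hG
  set f : ℕ → ℝ → ℝ := fun N t => ((N:ℝ)^K * z^N) * (t^(N-1) * (1-t)^N) with hf
  set c : ℕ → ℝ := fun N => (N:ℝ)^K * z^N *
    (((N-1).factorial : ℝ) * (N.factorial : ℝ) / ((2*N).factorial : ℝ)) with hc
  have hDne : ∀ (n : ℕ) (t : ℝ), (1 - z*t*(1-t))^(n+1) ≠ 0 :=
    fun n t => ne_of_gt (pow_pos (denom_pos hz0 hz4 t) _)
  have hGcont : ∀ n, Continuous (G n) := by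
    intro n
    apply Continuous.div (by fun_prop) (by fun_prop)
    exact fun t => hDne n t
  have hGeq : ∀ n, 1 ≤ n → ∀ t ∈ Set.Ioc (0:ℝ) 1,
      (1/t) * ((z*t*(1-t))^n / (1 - z*t*(1-t))^(n+1)) = G n t := by
    intro n hn t ht
    have ht0 : (0:ℝ) < t := ht.1
    have htn : t^(n-1) * t = t^n := by
      rw [← pow_succ]
      congr 1
      omega
    have hpow : (z*t*(1-t))^n = z^n * (t^(n-1)*t) * (1-t)^n := by
      rw [mul_pow, mul_pow, htn]
    have harr : (1:ℝ)/t * (z ^ n * (t ^ (n - 1) * t) * (1 - t) ^ n / (1 - z*t*(1-t))^(n+1))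
        = (z ^ n * t ^ (n - 1) * (1 - t) ^ n / (1 - z*t*(1-t))^(n+1)) * (t * (1/t)) := by
      ring
    rw [hpow, harr, mul_one_div, div_self ht0.ne', mul_one]
  have hfcont : ∀ N, Continuous (f N) := by intro N; fun_prop
  have hfint : ∀ N, MeasureTheory.IntegrableOn (f N) (Set.Ioc (0:ℝ) 1) :=
    fun N => ((hfcont N).continuousOn.integrableOn_Icc).mono_set Set.Ioc_subset_Icc_self
  have hcnonneg : ∀ N, 0 ≤ c N := by
    intro N
    have := hz0.le
    positivity
  have hsum_c : Summable c := summable_c K hK hz0 hz4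
  have hintegral : ∀ N, ∫ t in Set.Ioc (0:ℝ) 1, f N t = c N := fun N => integral_f K hK z N
  -- pointwise identity on Ioc 0 1
  have hpointwise : ∀ t ∈ Set.Ioc (0:ℝ) 1,
      ∑ n ∈ Icc 1 K, T n * G n t = ∑' N : ℕ, f N t := by
    intro t ht
    have ht0 : (0:ℝ) < t := ht.1
    have ht1 : t ≤ 1 := ht.2
    have hx0 : 0 ≤ z*t*(1-t) := by
      have : (0:ℝ) ≤ 1 - t := by linarith
      positivity
    have hx1 : z*t*(1-t) < 1 := by have := denom_pos hz0 hz4 t; linarith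
    calc ∑ n ∈ Icc 1 K, T n * G n t
        = ∑ n ∈ Icc 1 K, (1/t) * (T n * ((z*t*(1-t))^n / (1 - z*t*(1-t))^(n+1))) := by
          refine Finset.sum_congr rfl fun n hn => ?_
          rw [← hGeq n (Finset.mem_Icc.mp hn).1 t ht]
          ring
      _ = (1/t) * ∑ n ∈ Icc 1 K, T n * ((z*t*(1-t))^n / (1 - z*t*(1-t))^(n+1)) := by
          rw [Finset.mul_sum]
      _ = (1/t) * ∑' N : ℕ, (N:ℝ)^K * (z*t*(1-t))^N := by
          rw [series_identity hx0 hx1 K hK]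
      _ = ∑' N : ℕ, (1/t) * ((N:ℝ)^K * (z*t*(1-t))^N) := (tsum_mul_left).symm
      _ = ∑' N : ℕ, f N t := by
          refine tsum_congr fun N => ?_
          rcases Nat.eq_zero_or_pos N with rfl | hN
          · simp [hf, zero_pow (by omega : K ≠ 0)]
          · have htn : t^(N-1) * t = t^N := by
              rw [← pow_succ]
              congr 1
              omega
            have hpow : (z*t*(1-t))^N = z^N * (t^(N-1)*t) * (1-t)^N := by
              rw [mul_pow, mul_pow, htn]
            simp only [hf, hpow]
            field_simp
  -- swap integral and tsum
  have hlint : ∀ N : ℕ, (∫⁻ t in Set.Ioc (0:ℝ) 1, ‖f N t‖ₑ) = ENNReal.ofReal (c N) := by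
    intro N
    have hnn : 0 ≤ᵐ[MeasureTheory.volume.restrict (Set.Ioc (0:ℝ) 1)] f N := by
      filter_upwards [MeasureTheory.ae_restrict_mem measurableSet_Ioc] with t ht
      have h1 : (0:ℝ) < t := ht.1
      have h2 : (0:ℝ) ≤ 1 - t := by linarith [ht.2]
      have := hz0.le
      simp only [hf]
      positivity
    rw [← hintegral N, MeasureTheory.ofReal_integral_eq_lintegral_ofReal (hfint N) hnn]
    refine MeasureTheory.lintegral_congr_ae ?_
    filter_upwards [hnn] with t ht
    rw [← Real.enorm_eq_ofReal ht]
  have hswap : (∫ t in Set.Ioc (0:ℝ) 1, (∑' N : ℕ, f N t))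
      = ∑' N : ℕ, ∫ t in Set.Ioc (0:ℝ) 1, f N t := by
    refine MeasureTheory.integral_tsum (fun N => (hfcont N).aestronglyMeasurable) ?_
    rw [funext hlint, ← ENNReal.ofReal_tsum_of_nonneg hcnonneg hsum_c]
    exact ENNReal.ofReal_ne_top
  -- LHS equals ∑' c
  have hapery : (∑' n : ℕ, ((n : ℝ) + 1) ^ k * z ^ (n + 1)
        / (Nat.choose (2 * (n + 1)) (n + 1))) = ∑' N : ℕ, c N := by
    rw [Summable.tsum_eq_zero_add hsum_c]
    have hc0 : c 0 = 0 := by simp [hc, zero_pow (by omega : K ≠ 0)]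
    rw [hc0, zero_add]
    refine tsum_congr fun n => ?_
    have h0 := Nat.choose_mul_factorial_mul_factorial (show n+1 ≤ 2*(n+1) by omega)
    rw [show 2*(n+1) - (n+1) = n+1 by omega] at h0
    have hCF : ((2*(n+1)).choose (n+1) : ℝ) * (((n:ℝ)+1) * (n.factorial : ℝ))
          * (((n:ℝ)+1) * (n.factorial : ℝ)) = ((2*(n+1)).factorial : ℝ) := by
      have h1 : ((2*(n+1)).choose (n+1) * ((n+1) * n.factorial) * ((n+1) * n.factorial) : ℕ)
          = (2*(n+1)).factorial := by
        rw [← Nat.factorial_succ]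
        exact h0
      exact_mod_cast h1
    have hCne : ((2*(n+1)).choose (n+1) : ℝ) ≠ 0 := by
      exact_mod_cast (Nat.choose_pos (show n+1 ≤ 2*(n+1) by omega)).ne'
    have hfacne : ((n.factorial : ℝ)) ≠ 0 := by
      exact_mod_cast (Nat.factorial_pos _).ne'
    have hfs : ((n+1).factorial : ℝ) = ((n:ℝ)+1) * (n.factorial : ℝ) := by
      rw [Nat.factorial_succ]; push_cast; ring
    have hNK : ((n+1 : ℕ):ℝ)^K = ((n:ℝ)+1)^k * ((n:ℝ)+1) := by
      rw [hKdef]; push_cast; ring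
    simp only [hc, show (n+1) - 1 = n from rfl]
    rw [hNK, hfs, ← hCF]
    have hn1 : ((n:ℝ)+1) ≠ 0 := by positivity
    field_simp
  -- RHS manipulation
  have step1 : ∀ n, 1 ≤ n →
      (∫ t in (0:ℝ)..1, (1/t) * ((z*t*(1-t))^n / (1 - z*t*(1-t))^(n+1)))
        = ∫ t in Set.Ioc (0:ℝ) 1, G n t := by
    intro n hn
    rw [intervalIntegral.integral_of_le zero_le_one]
    exact MeasureTheory.setIntegral_congr_fun measurableSet_Ioc (fun t ht => hGeq n hn t ht)
  calc (∑' n : ℕ, ((n : ℝ) + 1) ^ k * z ^ (n + 1) / (Nat.choose (2 * (n + 1)) (n + 1)))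
      = ∑' N : ℕ, c N := hapery
    _ = ∑' N : ℕ, ∫ t in Set.Ioc (0:ℝ) 1, f N t := by rw [funext hintegral]
    _ = ∫ t in Set.Ioc (0:ℝ) 1, (∑' N : ℕ, f N t) := hswap.symm
    _ = ∫ t in Set.Ioc (0:ℝ) 1, (∑ n ∈ Icc 1 K, T n * G n t) :=
        (MeasureTheory.setIntegral_congr_fun measurableSet_Ioc
          (fun t ht => (hpointwise t ht).symm))
    _ = ∑ n ∈ Icc 1 K, ∫ t in Set.Ioc (0:ℝ) 1, T n * G n t := by
        refine MeasureTheory.integral_finset_sum _ fun n _ => ?_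
        exact (((hGcont n).continuousOn.integrableOn_Icc).mono_set
          Set.Ioc_subset_Icc_self).const_mul (T n)
    _ = ∑ n ∈ Icc 1 K, T n * ∫ t in Set.Ioc (0:ℝ) 1, G n t := by
        refine Finset.sum_congr rfl fun n _ => ?_
        rw [integral_const_mul]
    _ = ∑ n ∈ Finset.Icc 1 (k + 1), ∑ m ∈ Finset.Icc 1 n,
        (-1 : ℝ) ^ (m + n) * (Nat.choose n m) * (m : ℝ) ^ (k + 1) *
          ∫ t in (0:ℝ)..1,
            (1 / t) * ((z * t * (1 - t)) ^ n / (1 - z * t * (1 - t)) ^ (n + 1)) := by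
        refine Finset.sum_congr rfl fun n hn => ?_
        rw [step1 n (Finset.mem_Icc.mp hn).1, ← Finset.sum_mul]

theorem apery_series_eq_double_sum_integral (k : ℕ) (z : ℝ) (hz0 : 0 < z) (hz4 : z < 4) :
    aperySeries k z =
      ∑ n ∈ Finset.Icc 1 (k + 1), ∑ m ∈ Finset.Icc 1 n,
        (-1 : ℝ) ^ (m + n) * (Nat.choose n m) * (m : ℝ) ^ (k + 1) *
          ∫ t in (0:ℝ)..1,
            (1 / t) * ((z * t * (1 - t)) ^ n / (1 - z * t * (1 - t)) ^ (n + 1)) := by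
  unfold aperySeries
  exact apery_series_eq_double_sum_integral' k z hz0 hz4
end
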